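/- Let n ≥ 2 and let f ∈ F, f ≠ 0, be given by an admissible linear system 𝒜 = (e₁, A, v) of dimension n whose left family and right family are each K-linearly independent and with 1 ∉ R(𝒜), where A has the block form A = [[a, b', b], [a', B, b''], [0, 0, 1]] (with B ∈ F^{(n−2)×(n−2)}, b' ∈ F^{1×(n−2)}, a, b ∈ F, a', b'' ∈ F^{(n−2)×1}) and v = (0,…,0,λ)ᵀ with λ ∈ K. Then the n × n matrix A' = [[−λ Σ b'', −Σ B Σ, −Σ a'], [−λ b, −b' Σ, −a], [0, 0, 1]] (Σ = Σ_{n−2}) is invertible over F, 𝒜' = (e₁, A', e_n) is an admissible linear system of dimension n for f⁻¹, the left family and the right family of 𝒜' are each K-linearly independent, and 1 ∉ R(𝒜'). -/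

import Mathlib

open Matrix

/-- The permutation matrix `Σ_m` reversing the order of rows/columns. -/
def revMat (F : Type*) [Semiring F] (m : ℕ) : Matrix (Fin m) (Fin m) F :=
  Matrix.of fun p q => if q = p.rev then 1 else 0

lemma rev_eq_comm {m : ℕ} (x j : Fin m) : (j = x.rev) = (x = j.rev) := by
  rw [eq_iff_iff]
  constructor <;> (intro h; simp [h, Fin.rev_rev])

lemma revMat_mul_apply {F : Type*} [Semiring F] {m : ℕ} {n : Type*} [Fintype n]
    (M : Matrix (Fin m) n F) (i : Fin m) (j : n) :
    (revMat F m * M) i j = M i.rev j := by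
  simp [revMat, Matrix.mul_apply, ite_mul]

lemma mul_revMat_apply {F : Type*} [Semiring F] {m : ℕ} {n : Type*} [Fintype n]
    (M : Matrix n (Fin m) F) (i : n) (j : Fin m) :
    (M * revMat F m) i j = M i j.rev := by
  simp [revMat, Matrix.mul_apply, mul_ite, rev_eq_comm]

lemma revMat_mul_self (F : Type*) [Semiring F] (m : ℕ) :
    revMat F m * revMat F m = 1 := by
  ext p q
  rw [mul_revMat_apply]
  simp [revMat, Matrix.one_apply, rev_eq_comm, Fin.rev_rev, eq_comm]

lemma revMat_cancel {F : Type*} [Semiring F] {m : ℕ} {n p : Type*} [Fintype n] [Fintype p]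
    (X : Matrix n (Fin m) F) (Y : Matrix (Fin m) p F) :
    (X * revMat F m) * (revMat F m * Y) = X * Y := by
  rw [Matrix.mul_assoc, ← Matrix.mul_assoc (revMat F m), revMat_mul_self, Matrix.one_mul]

lemma fromRows_add {R : Type*} [AddCommMonoid R] {m₁ m₂ n : Type*}
    (A₁ B₁ : Matrix m₁ n R) (A₂ B₂ : Matrix m₂ n R) :
    fromRows A₁ A₂ + fromRows B₁ B₂ = fromRows (A₁ + B₁) (A₂ + B₂) := by
  ext (i | i) j <;> simp

def sigmaEquiv (m : ℕ) : ((Fin 1 ⊕ Fin m) ⊕ Fin 1) ≃ ((Fin 1 ⊕ Fin m) ⊕ Fin 1) where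
  toFun p := match p with
    | .inl (.inl _) => .inr 0
    | .inl (.inr i) => .inl (.inr i.rev)
    | .inr _ => .inl (.inl 0)
  invFun p := match p with
    | .inr _ => .inl (.inl 0)
    | .inl (.inr i) => .inl (.inr i.rev)
    | .inl (.inl _) => .inr 0
  left_inv := by
    rintro ((p | i) | p)
    · simp [Subsingleton.elim p 0]
    · simp [Fin.rev_rev]
    · simp [Subsingleton.elim p 0]
  right_inv := by
    rintro ((p | i) | p)
    · simp [Subsingleton.elim p 0]
    · simp [Fin.rev_rev]
    · simp [Subsingleton.elim p 0]

def iotaFun (m : ℕ) : ((Fin m ⊕ Fin 1) ⊕ Fin 1) → (((Fin 1 ⊕ Fin m) ⊕ Fin 1) ⊕ Fin 1)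
  | .inl (.inl i) => .inl (.inl (.inr i.rev))
  | .inl (.inr _) => .inl (.inl (.inl 0))
  | .inr _ => .inr 0

lemma iotaFun_injective (m : ℕ) : Function.Injective (iotaFun m) := by
  intro p q h
  rcases p with (i | i) | i <;> rcases q with (j | j) | j <;>
    simp_all [iotaFun, Fin.rev_inj] <;>
    exact Subsingleton.elim i j

set_option maxHeartbeats 2000000 in
/-- Inverse of type (0,1): if `f ≠ 0` has a minimal ALS of dimension `n = m + 2` with
system matrix `[[a, b', b], [a', B, b''], [0, 0, 1]]`, right-hand side `(0,…,0,λ)ᵀ`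
and `1 ∉ R(𝒜)`, then `A' = [[−λ Σ b'', −Σ B Σ, −Σ a'], [−λ b, −b' Σ, −a], [0, 0, 1]]`
gives a minimal ALS `(e₁, A', e_n)` of dimension `n` for `f⁻¹` with `1 ∉ R(𝒜')`. -/
theorem inverse_type_zero_one {K F : Type*} [Field K] [DivisionRing F] [Algebra K F]
    {m : ℕ}
    (f : F) (hne : f ≠ 0)
    (a b : F) (b' : Matrix (Fin 1) (Fin m) F) (B : Matrix (Fin m) (Fin m) F)
    (a' b'' : Matrix (Fin m) (Fin 1) F) (lam : K)
    (A : Matrix ((Fin 1 ⊕ Fin m) ⊕ Fin 1) ((Fin 1 ⊕ Fin m) ⊕ Fin 1) F)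
    (hA : A = fromBlocks (fromBlocks (Matrix.of fun _ _ => a) b' a' B)
      (fromRows (Matrix.of fun _ _ => b) b'') 0 1)
    (v : Matrix ((Fin 1 ⊕ Fin m) ⊕ Fin 1) (Fin 1) F)
    (hv : v = Matrix.of fun p _ =>
      if p = Sum.inr 0 then algebraMap K F lam else 0)
    (Binv : Matrix ((Fin 1 ⊕ Fin m) ⊕ Fin 1) ((Fin 1 ⊕ Fin m) ⊕ Fin 1) F)
    (hAB : A * Binv = 1) (hBA : Binv * A = 1)
    (hf : f = (Binv * v) (Sum.inl (Sum.inl 0)) 0)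
    (hleft : LinearIndependent K fun p => (Binv * v) p 0)
    (hright : LinearIndependent K fun q => Binv (Sum.inl (Sum.inl 0)) q)
    (honeR : (1 : F) ∉ Submodule.span K
      (Set.range fun q => Binv (Sum.inl (Sum.inl 0)) q)) :
    let S : Matrix (Fin m) (Fin m) F := revMat F m
    let A' : Matrix ((Fin m ⊕ Fin 1) ⊕ Fin 1) ((Fin 1 ⊕ Fin m) ⊕ Fin 1) F :=
      fromBlocks
        (fromBlocks (-(algebraMap K F lam • (S * b''))) (-(S * B * S))
          (Matrix.of fun _ _ => -(algebraMap K F lam * b)) (-(b' * S)))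
        (fromRows (-(S * a')) (Matrix.of fun _ _ => -a))
        0 1
    let v' : Matrix ((Fin m ⊕ Fin 1) ⊕ Fin 1) (Fin 1) F :=
      Matrix.of fun p _ => if p = Sum.inr 0 then 1 else 0
    ∃ B' : Matrix ((Fin 1 ⊕ Fin m) ⊕ Fin 1) ((Fin m ⊕ Fin 1) ⊕ Fin 1) F,
      A' * B' = 1 ∧ B' * A' = 1 ∧
      (B' * v') (Sum.inl (Sum.inl 0)) 0 = f⁻¹ ∧
      (LinearIndependent K fun p => (B' * v') p 0) ∧
      (LinearIndependent K fun q => B' (Sum.inl (Sum.inl 0)) q) ∧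
      (1 : F) ∉ Submodule.span K
        (Set.range fun q => B' (Sum.inl (Sum.inl 0)) q) := by
  intro S A' v'
  classical
  set lF : F := algebraMap K F lam with hlF
  -- basic 1×1 blocks
  set a1 : Matrix (Fin 1) (Fin 1) F := Matrix.of fun _ _ => a with ha1
  set b1 : Matrix (Fin 1) (Fin 1) F := Matrix.of fun _ _ => b with hb1
  set Ah : Matrix (Fin 1 ⊕ Fin m) (Fin 1 ⊕ Fin m) F := fromBlocks a1 b' a' B with hAh
  set cc : Matrix (Fin 1 ⊕ Fin m) (Fin 1) F := fromRows b1 b'' with hcc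
  have hA2 : A = fromBlocks Ah cc 0 1 := by rw [hA]
  -- block decomposition of Binv
  set W : Matrix (Fin 1 ⊕ Fin m) (Fin 1 ⊕ Fin m) F := Binv.toBlocks₁₁ with hWdef
  set xB : Matrix (Fin 1 ⊕ Fin m) (Fin 1) F := Binv.toBlocks₁₂ with hxBdef
  set yB : Matrix (Fin 1) (Fin 1 ⊕ Fin m) F := Binv.toBlocks₂₁ with hyBdef
  set zB : Matrix (Fin 1) (Fin 1) F := Binv.toBlocks₂₂ with hzBdef
  have hBinvB : Binv = fromBlocks W xB yB zB := (fromBlocks_toBlocks Binv).symm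
  have hABblocks := hAB
  rw [hA2, hBinvB, fromBlocks_multiply, ← fromBlocks_one] at hABblocks
  obtain ⟨e1, e2, e3, e4⟩ := fromBlocks_inj.mp hABblocks
  simp only [Matrix.zero_mul, Matrix.one_mul, zero_add] at e3 e4
  have hBAblocks := hBA
  rw [hA2, hBinvB, fromBlocks_multiply, ← fromBlocks_one] at hBAblocks
  obtain ⟨g1, g2, _, _⟩ := fromBlocks_inj.mp hBAblocks
  simp only [Matrix.mul_zero, Matrix.mul_one, add_zero] at g1 g2
  rw [e3] at e1; rw [e4] at e2
  simp only [Matrix.mul_zero, Matrix.mul_one, add_zero] at e1 e2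
  -- e1 : Ah * W = 1, e2 : Ah * xB + cc = 0, g1 : W * Ah = 1, g2 : W * cc + xB = 0
  -- entries of the left family
  have hsval : ∀ p, (Binv * v) p 0 = Binv p (Sum.inr 0) * lF := by
    intro p
    rw [hv]
    simp [Matrix.mul_apply, mul_ite]
  set x0 : F := xB (Sum.inl 0) 0 with hx0def
  have hf0 : f = x0 * lF := by rw [hf, hsval]; rfl
  have hlFne : lF ≠ 0 := by
    intro h; exact hne (by rw [hf0, h, mul_zero])
  have hlamne : lam ≠ 0 := by
    intro h; apply hlFne; rw [hlF, h, map_zero]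
  have hfc : f = lF * x0 := by rw [hf0]; exact (Algebra.commutes lam x0).symm
  -- split xB into rows
  set x1 : Matrix (Fin 1) (Fin 1) F := xB.toRows₁ with hx1def
  set xm : Matrix (Fin m) (Fin 1) F := xB.toRows₂ with hxmdef
  have hxrows : xB = fromRows x1 xm := (fromRows_toRows xB).symm
  have hx1 : x1 = Matrix.of fun _ _ => x0 := by
    ext i j; fin_cases i; fin_cases j; rfl
  have hAxrows : fromRows (a1 * x1 + b' * xm + b1) (a' * x1 + B * xm + b'') = fromRows 0 0 := by
    rw [fromRows_zero, ← e2, hxrows, hAh, hcc, fromBlocks_mul_fromRows, fromRows_add]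
  obtain ⟨k1, k2⟩ := fromRows_inj hAxrows
  -- 1×1 matrices for f
  set f1 : Matrix (Fin 1) (Fin 1) F := Matrix.of fun _ _ => f with hf1def
  set fi1 : Matrix (Fin 1) (Fin 1) F := Matrix.of fun _ _ => f⁻¹ with hfi1def
  have hf1fi1 : f1 * fi1 = 1 := by
    ext i j; fin_cases i; fin_cases j
    simp [hf1def, hfi1def, Matrix.mul_apply, mul_inv_cancel₀ hne]
  have hfi1f1 : fi1 * f1 = 1 := by
    ext i j; fin_cases i; fin_cases j
    simp [hf1def, hfi1def, Matrix.mul_apply, inv_mul_cancel₀ hne]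
  have hf1x : f1 = lam • x1 := by
    ext i j; fin_cases i; fin_cases j
    simp [hf1def, hx1, Algebra.smul_def, ← hlF, ← hfc]
  -- permutation matrices
  have hSS : revMat F m * revMat F m = (1 : Matrix (Fin m) (Fin m) F) := revMat_mul_self F m
  set P : Matrix (Fin m ⊕ Fin 1) (Fin 1 ⊕ Fin m) F :=
    fromBlocks 0 (revMat F m) (1 : Matrix (Fin 1) (Fin 1) F) 0 with hPdef
  set Pt : Matrix (Fin 1 ⊕ Fin m) (Fin m ⊕ Fin 1) F :=
    fromBlocks 0 (1 : Matrix (Fin 1) (Fin 1) F) (revMat F m) 0 with hPtdef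
  have hPPt : P * Pt = 1 := by
    rw [hPdef, hPtdef, fromBlocks_multiply]
    simp [hSS]
  have hPtP : Pt * P = 1 := by
    rw [hPdef, hPtdef, fromBlocks_multiply]
    simp [hSS]
  -- middle transformation
  set M : Matrix (Fin 1 ⊕ Fin m) (Fin 1 ⊕ Fin m) F :=
    fromBlocks (-f1) 0 (-(lam • xm)) (revMat F m) with hMdef
  set Minv : Matrix (Fin 1 ⊕ Fin m) (Fin 1 ⊕ Fin m) F :=
    fromBlocks (-fi1) 0 (-(lam • (revMat F m * xm * fi1))) (revMat F m) with hMinvdef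
  have hMMinv : M * Minv = 1 := by
    rw [hMdef, hMinvdef, fromBlocks_multiply, ← fromBlocks_one, fromBlocks_inj]
    refine ⟨by simp [hf1fi1], by simp, ?_, by simp [hSS]⟩
    simp [Matrix.smul_mul, Matrix.mul_smul, ← Matrix.mul_assoc, hSS]
  have hMinvM : Minv * M = 1 := by
    rw [hMdef, hMinvdef, fromBlocks_multiply, ← fromBlocks_one, fromBlocks_inj]
    refine ⟨by simp [hfi1f1], by simp, ?_, by simp [hSS]⟩
    simp [Matrix.smul_mul, Matrix.mul_smul, Matrix.mul_assoc, hfi1f1]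
  -- outer transformations
  set eC : Matrix (Fin 1 ⊕ Fin m) (Fin 1) F := fromRows 1 0 with heCdef
  set w : Matrix (Fin 1 ⊕ Fin m) (Fin 1) F := eC + xB with hwdef
  set L : Matrix ((Fin m ⊕ Fin 1) ⊕ Fin 1) ((Fin 1 ⊕ Fin m) ⊕ Fin 1) F :=
    fromBlocks (-P) 0 0 1 with hLdef
  set Linv : Matrix ((Fin 1 ⊕ Fin m) ⊕ Fin 1) ((Fin m ⊕ Fin 1) ⊕ Fin 1) F :=
    fromBlocks (-Pt) 0 0 1 with hLinvdef
  have hLLinv : L * Linv = 1 := by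
    rw [hLdef, hLinvdef, fromBlocks_multiply]
    simp [hPPt]
  have hLinvL : Linv * L = 1 := by
    rw [hLdef, hLinvdef, fromBlocks_multiply]
    simp [hPtP]
  set R : Matrix ((Fin 1 ⊕ Fin m) ⊕ Fin 1) ((Fin 1 ⊕ Fin m) ⊕ Fin 1) F :=
    fromBlocks M w 0 1 with hRdef
  set Rinv : Matrix ((Fin 1 ⊕ Fin m) ⊕ Fin 1) ((Fin 1 ⊕ Fin m) ⊕ Fin 1) F :=
    fromBlocks Minv (-(Minv * w)) 0 1 with hRinvdef
  have hRRinv : R * Rinv = 1 := by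
    rw [hRdef, hRinvdef, fromBlocks_multiply, ← fromBlocks_one, fromBlocks_inj]
    refine ⟨by simp [hMMinv], ?_, by simp, by simp⟩
    rw [Matrix.mul_neg, ← Matrix.mul_assoc, hMMinv, Matrix.one_mul, Matrix.mul_one,
      neg_add_cancel]
  have hRinvR : Rinv * R = 1 := by
    rw [hRdef, hRinvdef, fromBlocks_multiply, ← fromBlocks_one, fromBlocks_inj]
    refine ⟨by simp [hMinvM], ?_, by simp, by simp⟩
    rw [Matrix.neg_mul, Matrix.mul_one, add_neg_cancel]
  -- explicit form of A' with K-scalars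
  have hsm : ∀ y : F, lam • y = lF * y := fun y => by rw [Algebra.smul_def, ← hlF]
  have hA'2 : A' = fromBlocks
      (fromBlocks (-(lam • (revMat F m * b''))) (-(revMat F m * B * revMat F m))
        (-(lam • b1)) (-(b' * revMat F m)))
      (fromRows (-(revMat F m * a')) (-a1)) 0 1 := by
    ext p q
    rcases p with (p | p) | p <;> rcases q with (q | q) | q <;>
      simp [A', S, hb1, ha1, hsm, ← hlF]
  -- the key products
  have hPAh : P * Ah = fromBlocks (revMat F m * a') (revMat F m * B) a1 b' := by
    rw [hPdef, hAh, fromBlocks_multiply]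
    simp
  have hPAhM : (P * Ah) * M = fromBlocks (lam • (revMat F m * b'')) (revMat F m * B * revMat F m)
      (lam • b1) (b' * revMat F m) := by
    rw [hPAh, hMdef, fromBlocks_multiply, fromBlocks_inj]
    have hk2 : a' * x1 + B * xm = -b'' := by
      rw [← add_eq_zero_iff_eq_neg]; exact k2
    have hk1 : a1 * x1 + b' * xm = -b1 := by
      rw [← add_eq_zero_iff_eq_neg]; exact k1
    refine ⟨?_, by simp, ?_, by simp⟩
    · rw [Matrix.mul_neg, Matrix.mul_neg, hf1x, Matrix.mul_smul, Matrix.mul_smul,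
        ← smul_neg, ← smul_neg, ← smul_add, ← neg_add, Matrix.mul_assoc, Matrix.mul_assoc,
        ← Matrix.mul_add, hk2, Matrix.mul_neg, neg_neg]
    · rw [Matrix.mul_neg, Matrix.mul_neg, hf1x, Matrix.mul_smul, Matrix.mul_smul,
        ← smul_neg, ← smul_neg, ← smul_add, ← neg_add, hk1, neg_neg]
  have hAhxB : Ah * xB = -cc := by
    rw [← add_eq_zero_iff_eq_neg]; exact e2
  have hPAhw : (P * Ah) * w + P * cc = fromRows (revMat F m * a') a1 := by
    rw [hwdef, Matrix.mul_add, Matrix.mul_assoc P Ah xB, hAhxB, Matrix.mul_neg,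
      add_assoc, neg_add_cancel, add_zero, hPAh, heCdef, fromBlocks_mul_fromRows]
    simp
  have hfac : A' = L * A * R := by
    rw [hA2, hLdef, hRdef, fromBlocks_multiply, fromBlocks_multiply]
    rw [hA'2, fromBlocks_inj]
    refine ⟨?_, ?_, by simp, by simp⟩
    · simp only [Matrix.zero_mul, Matrix.mul_zero, add_zero, zero_add, Matrix.mul_one,
        Matrix.neg_mul, hPAhM, fromBlocks_neg]
    · simp only [Matrix.zero_mul, Matrix.mul_zero, add_zero, zero_add, Matrix.mul_one,
        Matrix.neg_mul]
      rw [← neg_add, hPAhw, fromRows_neg]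
  -- cancellation helper
  have revC : ∀ (n : Type) [Fintype n] (Y : Matrix (Fin m) n F),
      revMat F m * (revMat F m * Y) = Y := by
    intro n _ Y; rw [← Matrix.mul_assoc, hSS, Matrix.one_mul]
  have hZ : lam • (x1 * fi1) = (1 : Matrix (Fin 1) (Fin 1) F) := by
    rw [← Matrix.smul_mul, ← hf1x, hf1fi1]
  -- the inverse system matrix
  set B' : Matrix ((Fin 1 ⊕ Fin m) ⊕ Fin 1) ((Fin m ⊕ Fin 1) ⊕ Fin 1) F :=
    Rinv * Binv * Linv with hB'def
  have hA'B' : A' * B' = 1 := by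
    rw [hfac, hB'def, Matrix.mul_assoc Rinv Binv Linv, Matrix.mul_assoc (L * A) R _,
      ← Matrix.mul_assoc R Rinv _, hRRinv, Matrix.one_mul,
      ← Matrix.mul_assoc (L * A) Binv Linv, Matrix.mul_assoc L A Binv, hAB,
      Matrix.mul_one, hLLinv]
  have hB'A' : B' * A' = 1 := by
    rw [hfac, hB'def, Matrix.mul_assoc L A R, Matrix.mul_assoc (Rinv * Binv) Linv _,
      ← Matrix.mul_assoc Linv L _, hLinvL, Matrix.one_mul,
      ← Matrix.mul_assoc (Rinv * Binv) A R, Matrix.mul_assoc Rinv Binv A, hBA,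
      Matrix.mul_one, hRinvR]
  -- the left family of the new system
  set s' : Matrix ((Fin 1 ⊕ Fin m) ⊕ Fin 1) (Fin 1) F :=
    fromRows (fromRows fi1 (lam • (revMat F m * xm * fi1))) 1 with hs'row
  have hv'2 : v' = fromRows (0 : Matrix (Fin m ⊕ Fin 1) (Fin 1) F)
      (1 : Matrix (Fin 1) (Fin 1) F) := by
    ext (p | p) q
    · simp [v']
    · fin_cases p <;> fin_cases q <;> simp [v', Matrix.one_apply]
  have hcomb1 : b'' * fi1 + B * (xm * fi1) = -(a' * (x1 * fi1)) := by
    have hk2' : b'' + B * xm = -(a' * x1) := by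
      rw [← add_eq_zero_iff_eq_neg, ← k2]; abel
    calc b'' * fi1 + B * (xm * fi1) = (b'' + B * xm) * fi1 := by
          rw [Matrix.add_mul, Matrix.mul_assoc]
      _ = -(a' * x1) * fi1 := by rw [hk2']
      _ = -(a' * (x1 * fi1)) := by rw [Matrix.neg_mul, Matrix.mul_assoc]
  have hcomb2 : b1 * fi1 + b' * (xm * fi1) = -(a1 * (x1 * fi1)) := by
    have hk1' : b1 + b' * xm = -(a1 * x1) := by
      rw [← add_eq_zero_iff_eq_neg, ← k1]; abel
    calc b1 * fi1 + b' * (xm * fi1) = (b1 + b' * xm) * fi1 := by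
          rw [Matrix.add_mul, Matrix.mul_assoc]
      _ = -(a1 * x1) * fi1 := by rw [hk1']
      _ = -(a1 * (x1 * fi1)) := by rw [Matrix.neg_mul, Matrix.mul_assoc]
  have hrow1 : -(lam • (revMat F m * b'')) * fi1 +
      -(revMat F m * B * revMat F m) * (lam • (revMat F m * xm * fi1)) +
      -(revMat F m * a') = 0 := by
    simp only [Matrix.neg_mul, Matrix.smul_mul, Matrix.mul_smul, smul_neg, Matrix.mul_assoc, revC]
    rw [← neg_add, ← smul_add, ← Matrix.mul_add, hcomb1, Matrix.mul_neg, smul_neg, neg_neg,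
      ← Matrix.mul_smul, ← Matrix.mul_smul, hZ, Matrix.mul_one, add_neg_cancel]
  have hrow2 : -(lam • b1) * fi1 + -(b' * revMat F m) * (lam • (revMat F m * xm * fi1)) +
      -a1 = 0 := by
    simp only [Matrix.neg_mul, Matrix.smul_mul, Matrix.mul_smul, smul_neg, Matrix.mul_assoc, revC]
    rw [← neg_add, ← smul_add, hcomb2, smul_neg, neg_neg,
      ← Matrix.mul_smul, hZ, Matrix.mul_one, add_neg_cancel]
  have hA's' : A' * s' = v' := by
    rw [hA'2, hs'row, hv'2, fromBlocks_mul_fromRows, fromBlocks_mul_fromRows,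
      Matrix.mul_one, fromRows_add, fromRows_ext_iff]
    constructor
    · rw [show (0 : Matrix (Fin m ⊕ Fin 1) (Fin 1) F) = fromRows 0 0 from fromRows_zero.symm,
        fromRows_ext_iff]
      constructor
      · rw [← hrow1]
      · rw [← hrow2]
    · simp
  have hs'B' : B' * v' = s' := by
    rw [← hA's', ← Matrix.mul_assoc, hB'A', Matrix.one_mul]
  have hentry : (B' * v') (Sum.inl (Sum.inl 0)) 0 = f⁻¹ := by
    rw [hs'B', hs'row]
    simp [hfi1def]
  -- the right family of the new system
  set t0m : Matrix (Fin 1) (Fin 1) F := Matrix.of fun _ _ => W (Sum.inl 0) (Sum.inl 0)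
    with ht0m
  set tmr : Matrix (Fin 1) (Fin m) F := Matrix.of fun _ j => W (Sum.inl 0) (Sum.inr j)
    with htmr
  set t' : Matrix (Fin 1) ((Fin m ⊕ Fin 1) ⊕ Fin 1) F :=
    fromCols (fromCols (fi1 * (tmr * revMat F m)) (fi1 * t0m)) fi1 with ht'def
  have hg1e : ∀ i j, (W * Ah) i j = (1 : Matrix (Fin 1 ⊕ Fin m) (Fin 1 ⊕ Fin m) F) i j :=
    fun i j => by rw [g1]
  have hg2e : ∀ i j, (W * cc) i j + xB i j = -(0 : Matrix (Fin 1 ⊕ Fin m) (Fin 1) F) i j :=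
    fun i j => by rw [← Matrix.add_apply, g2]; simp
  have hta : t0m * a1 + tmr * a' = 1 := by
    ext i j
    fin_cases i; fin_cases j
    have h := hg1e (Sum.inl 0) (Sum.inl 0)
    simpa [Matrix.mul_apply, Fintype.sum_sum_type, hAh, ha1, ht0m, htmr,
      Matrix.one_apply] using h
  have htb : t0m * b' + tmr * B = 0 := by
    ext i j
    fin_cases i
    have h := hg1e (Sum.inl 0) (Sum.inr j)
    simpa [Matrix.mul_apply, Fintype.sum_sum_type, hAh, ht0m, htmr,
      Matrix.one_apply] using h
  have htc : t0m * b1 + tmr * b'' = -x1 := by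
    ext i j
    fin_cases i; fin_cases j
    have h := hg2e (Sum.inl 0) 0
    have h2 := eq_neg_of_add_eq_zero_left (by simpa using h)
    simpa [Matrix.mul_apply, Fintype.sum_sum_type, hcc, hb1, ht0m, htmr,
      hx1def] using h2
  have hcol1 : fi1 * (tmr * revMat F m) * (-(lam • (revMat F m * b''))) +
      fi1 * t0m * (-(lam • b1)) = 1 := by
    simp only [Matrix.mul_neg, Matrix.mul_smul, smul_neg, Matrix.mul_assoc, revC]
    rw [← neg_add, ← smul_add, ← Matrix.mul_add,
      show tmr * b'' + t0m * b1 = -x1 from by rw [add_comm]; exact htc,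
      Matrix.mul_neg, smul_neg, neg_neg, ← Matrix.mul_smul, ← hf1x, hfi1f1]
  have hcol2 : fi1 * (tmr * revMat F m) * (-(revMat F m * B * revMat F m)) +
      fi1 * t0m * (-(b' * revMat F m)) = 0 := by
    simp only [Matrix.mul_neg, Matrix.mul_smul, smul_neg, Matrix.mul_assoc, revC]
    rw [← neg_add, ← Matrix.mul_add, ← Matrix.mul_assoc tmr B _,
      ← Matrix.mul_assoc t0m b' _, ← Matrix.add_mul,
      show tmr * B + t0m * b' = 0 from by rw [add_comm]; exact htb]
    simp
  have hcol3 : fi1 * (tmr * revMat F m) * (-(revMat F m * a')) +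
      fi1 * t0m * (-a1) + fi1 = 0 := by
    simp only [Matrix.mul_neg, Matrix.mul_smul, smul_neg, Matrix.mul_assoc, revC]
    rw [← neg_add, ← Matrix.mul_add,
      show tmr * a' + t0m * a1 = 1 from by rw [add_comm]; exact hta,
      Matrix.mul_one, neg_add_cancel]
  have ht'A' : t' * A' = fromCols
      (fromCols (1 : Matrix (Fin 1) (Fin 1) F) (0 : Matrix (Fin 1) (Fin m) F))
      (0 : Matrix (Fin 1) (Fin 1) F) := by
    rw [ht'def, hA'2, fromCols_mul_fromBlocks, fromCols_mul_fromBlocks,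
      fromCols_mul_fromRows, Matrix.mul_zero, add_zero, Matrix.mul_one,
      fromCols_ext_iff]
    constructor
    · rw [fromCols_ext_iff]
      exact ⟨hcol1, hcol2⟩
    · exact hcol3
  -- the first row of B' equals t'
  have hrowt : ∀ q, B' (Sum.inl (Sum.inl 0)) q = t' 0 q := by
    have h1 : (t' * A') * B' = t' := by
      rw [Matrix.mul_assoc, hA'B', Matrix.mul_one]
    rw [ht'A'] at h1
    intro q
    have h3 := congrFun (congrFun h1 0) q
    rw [← h3]
    simp [Matrix.mul_apply, Fintype.sum_sum_type, Matrix.one_apply]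
  -- linear independence of the new left family
  have hker : LinearMap.ker (LinearMap.mulRight K f⁻¹) = ⊥ :=
    LinearMap.ker_eq_bot.mpr (fun x y h => mul_right_cancel₀ (inv_ne_zero hne) (by simpa using h))
  have hLI1 : LinearIndependent K ((fun p => (Binv * v) p 0) ∘ (sigmaEquiv m)) :=
    hleft.comp (sigmaEquiv m) (sigmaEquiv m).injective
  have hLI2 := hLI1.map' (LinearMap.mulRight K f⁻¹) hker
  set u : ((Fin 1 ⊕ Fin m) ⊕ Fin 1) → Kˣ :=
    Sum.elim (Sum.elim (fun _ => (Units.mk0 lam hlamne)⁻¹) (fun _ => 1)) (fun _ => 1) with hu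
  have hLI3 := hLI2.units_smul u
  have hsinr : (Binv * v) (Sum.inr 0) 0 = lF := by
    rw [hsval]
    have h5 : Binv (Sum.inr 0) (Sum.inr 0) = zB 0 0 := rfl
    rw [h5, e4]
    simp [Matrix.one_apply]
  have hleft' : LinearIndependent K fun p => (B' * v') p 0 := by
    have hfun : (u • ((LinearMap.mulRight K f⁻¹) ∘
        ((fun p => (Binv * v) p 0) ∘ (sigmaEquiv m)))) = fun p => (B' * v') p 0 := by
      funext p
      rw [hs'B', hs'row]
      rcases p with (p | i) | p
      · show ((Units.mk0 lam hlamne)⁻¹ : Kˣ) • ((Binv * v) (Sum.inr 0) 0 * f⁻¹) = _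
        rw [hsinr]
        simp only [fromRows_apply_inl, Units.smul_def, Units.val_inv_eq_inv_val,
          Units.val_mk0]
        rw [Algebra.smul_def, map_inv₀, ← hlF, ← mul_assoc, inv_mul_cancel₀ hlFne, one_mul]
        simp [hfi1def]
      · show (1 : Kˣ) • ((Binv * v) (Sum.inl (Sum.inr i.rev)) 0 * f⁻¹) = _
        rw [hsval, one_smul]
        simp only [fromRows_apply_inl, fromRows_apply_inr]
        rw [Matrix.smul_apply, Matrix.mul_apply]
        rw [Fin.sum_univ_one]
        rw [revMat_mul_apply]
        have hBx : Binv (Sum.inl (Sum.inr i.rev)) (Sum.inr 0) = xm i.rev 0 := rfl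
        rw [hBx, hfi1def]
        rw [Algebra.smul_def, ← hlF]
        show xm i.rev 0 * lF * f⁻¹ = lF * (xm i.rev 0 * f⁻¹)
        rw [← Algebra.commutes lam (xm i.rev 0), ← hlF, mul_assoc]
      · show (1 : Kˣ) • ((Binv * v) (Sum.inl (Sum.inl 0)) 0 * f⁻¹) = _
        rw [← hf, one_smul, mul_inv_cancel₀ hne]
        simp [Matrix.one_apply, Subsingleton.elim p 0]
    exact hfun ▸ hLI3
  -- linear independence of the new right family, and 1 not in its span
  haveI : NoZeroSMulDivisors K F :=
    inferInstance
  set T : (((Fin 1 ⊕ Fin m) ⊕ Fin 1) ⊕ Fin 1) → F :=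
    Sum.elim (fun q => Binv (Sum.inl (Sum.inl 0)) q) (fun _ => (1 : F)) with hTdef
  have hTli : LinearIndependent K T := by
    rw [hTdef, linearIndependent_sum]
    refine ⟨?_, ?_, ?_⟩
    · simpa [Sum.elim_comp_inl] using hright
    · rw [Sum.elim_comp_inr]
      exact linearIndependent_unique_iff.mpr one_ne_zero
    · rw [Sum.elim_comp_inl, Sum.elim_comp_inr, Set.range_const]
      rw [Submodule.disjoint_def]
      intro x hx hx1
      obtain ⟨k, hk⟩ := Submodule.mem_span_singleton.mp hx1
      by_cases hk0 : k = 0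
      · rw [← hk, hk0, zero_smul]
      · exfalso
        apply honeR
        have h1 : (1 : F) = k⁻¹ • x := by
          rw [← hk, smul_smul, inv_mul_cancel₀ hk0, one_smul]
        rw [h1]
        exact Submodule.smul_mem _ _ hx
  have hgli : LinearIndependent K (T ∘ iotaFun m) := hTli.comp _ (iotaFun_injective m)
  have hkerl : LinearMap.ker (LinearMap.mulLeft K f⁻¹) = ⊥ :=
    LinearMap.ker_eq_bot.mpr (fun x y h => mul_left_cancel₀ (inv_ne_zero hne) (by simpa using h))
  have hmapt := hgli.map' (LinearMap.mulLeft K f⁻¹) hkerl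
  have hfunt : ((LinearMap.mulLeft K f⁻¹) ∘ (T ∘ iotaFun m))
      = fun q => B' (Sum.inl (Sum.inl 0)) q := by
    funext q
    rw [Function.comp_apply, Function.comp_apply, hrowt q, ht'def]
    rcases q with (i | i) | i
    · show f⁻¹ * T (Sum.inl (Sum.inl (Sum.inr i.rev))) = _
      rw [hTdef]
      simp only [Sum.elim_inl, fromCols_apply_inl]
      rw [Matrix.mul_apply, Fin.sum_univ_one, mul_revMat_apply, hfi1def, htmr]
      have : Binv (Sum.inl (Sum.inl 0)) (Sum.inl (Sum.inr i.rev)) = W (Sum.inl 0) (Sum.inr i.rev) := rfl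
      rw [this]
      rfl
    · show f⁻¹ * T (Sum.inl (Sum.inl (Sum.inl 0))) = _
      rw [hTdef]
      simp only [Sum.elim_inl, fromCols_apply_inl, fromCols_apply_inr]
      rw [Matrix.mul_apply, Fin.sum_univ_one, hfi1def, ht0m]
      have : Binv (Sum.inl (Sum.inl 0)) (Sum.inl (Sum.inl 0)) = W (Sum.inl 0) (Sum.inl 0) := rfl
      rw [this]
      rfl
    · show f⁻¹ * T (Sum.inr 0) = _
      rw [hTdef]
      simp [hfi1def]
  have hright' : LinearIndependent K fun q => B' (Sum.inl (Sum.inl 0)) q :=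
    hfunt ▸ hmapt
  refine ⟨B', hA'B', hB'A', hentry, hleft', hright', ?_⟩
  intro hmem
  rw [← hfunt] at hmem
  rw [Set.range_comp, Submodule.span_image] at hmem
  obtain ⟨uu, huu, h1⟩ := hmem
  have huf : uu = f := by
    have h2 : f⁻¹ * uu = 1 := h1
    have h3 := congrArg (fun y => f * y) h2
    simpa [← mul_assoc, mul_inv_cancel₀ hne] using h3
  have hx0f : T (Sum.inl (Sum.inr 0)) = lam⁻¹ • f := by
    rw [hTdef]
    show Binv (Sum.inl (Sum.inl 0)) (Sum.inr 0) = lam⁻¹ • f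
    rw [hfc, Algebra.smul_def, map_inv₀, ← hlF, ← mul_assoc, inv_mul_cancel₀ hlFne, one_mul]
    rfl
  have hx0mem : T (Sum.inl (Sum.inr 0)) ∈ Submodule.span K (Set.range (T ∘ iotaFun m)) := by
    rw [hx0f]
    exact Submodule.smul_mem _ _ (huf ▸ huu)
  have hnotin : (Sum.inl (Sum.inr 0) : ((Fin 1 ⊕ Fin m) ⊕ Fin 1) ⊕ Fin 1)
      ∉ Set.range (iotaFun m) := by
    rintro ⟨q, hq⟩
    rcases q with (i | i) | i <;> simp [iotaFun] at hq
  have hnot := hTli.notMem_span_image hnotin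
  apply hnot
  rw [Set.range_comp] at hx0mem
  exact hx0mem
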